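/- For any g ∈ L²([L]×X, P), define g_i(x) = g(i,x) and ḡ(i,j) = ∫_{X⁰} g(i,x) p_{(i,j)}(x)/P_{(i,j)}(X⁰) dx. Let Ē^J(ḡ,ḡ) = (1/(2θ)) ∑_{i=1}^L ∑_{j,j'=1}^n (ḡ(i,j) − ḡ(i,j'))² r_i w_{(i,j)} P_{(i,j)}(X⁰) M̄((i,j),(i,j')), where θ = P([L]×X⁰). Then Ē^J(ḡ,ḡ) ≤ (2(1−λ)/θ) ∑_{i=1}^L ∑_{j=1}^n ( r_i w_{(i,j)} / P_{(i,j)}(X⁰) ) Var_{P_{(i,j)},X⁰}(g_i), where Var_{P_{(i,j)},X⁰}(g_i) = (1/2) ∫_{X⁰}∫_{X⁰} (g_i(x)−g_i(y))² P_{(i,j)}(dx) P_{(i,j)}(dy). -/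

import Mathlib

open MeasureTheory Finset
open scoped ENNReal NNReal

noncomputable section

/-- Adjacency of temperature levels: `i' = i ± 1`. -/
def adjacent {L : ℕ} (i i' : Fin L) : Prop :=
  (i' : ℕ) = (i : ℕ) + 1 ∨ (i : ℕ) = (i' : ℕ) + 1

instance {L : ℕ} (i i' : Fin L) : Decidable (adjacent i i') := by
  unfold adjacent; infer_instance

/-- The `S`-restricted variance `(1/2) ∫_S ∫_S (g(b) - g(a))² Π(da) Π(db)`. -/
def restVar {Ω : Type*} [MeasurableSpace Ω] (Pi : Measure Ω) (S : Set Ω) (g : Ω → ℝ) : ℝ :=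
  (1 / 2) * ∫ a in S, (∫ b in S, (g b - g a) ^ 2 ∂Pi) ∂Pi

/-- The stationary measure of the simulated tempering chain: density `p(i,x) = rᵢ pᵢ(x)`. -/
def stStat {X : Type*} [MeasurableSpace X] (ν : Measure X) {L : ℕ}
    (r : Fin L → ℝ) (p : Fin L → X → ℝ) : Measure (Fin L × X) :=
  Measure.sum fun i =>
    ENNReal.ofReal (r i) • ((ν.withDensity fun x => ENNReal.ofReal (p i x)).map fun x => (i, x))

lemma wd_setIntegral {X : Type*} [MeasurableSpace X] (ν : Measure X) {ρ : X → ℝ}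
    (hρm : Measurable ρ) (hρ0 : ∀ x, 0 ≤ ρ x) {S : Set X} (hS : MeasurableSet S) (f : X → ℝ) :
    ∫ x, f x ∂((ν.withDensity fun x => ENNReal.ofReal (ρ x)).restrict S)
      = ∫ x in S, f x * ρ x ∂ν := by
  rw [show (fun x => ENNReal.ofReal (ρ x)) = (fun x => ((ρ x).toNNReal : ENNReal)) from rfl,
    setIntegral_withDensity_eq_setIntegral_smul hρm.real_toNNReal f hS]
  refine integral_congr_ae (Filter.Eventually.of_forall fun x => ?_)
  simp [NNReal.smul_def, Real.coe_toNNReal _ (hρ0 x), mul_comm]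

lemma wd_integrable {X : Type*} [MeasurableSpace X] (ν : Measure X) {ρ : X → ℝ}
    (hρm : Measurable ρ) (hρ0 : ∀ x, 0 ≤ ρ x) {S : Set X} (hS : MeasurableSet S) (f : X → ℝ) :
    Integrable f ((ν.withDensity fun x => ENNReal.ofReal (ρ x)).restrict S) ↔
      Integrable (fun x => f x * ρ x) (ν.restrict S) := by
  rw [restrict_withDensity hS,
    integrable_withDensity_iff hρm.ennreal_ofReal
      (Filter.Eventually.of_forall fun x => ENNReal.ofReal_lt_top)]
  have : (fun x => f x * (ENNReal.ofReal (ρ x)).toReal) = fun x => f x * ρ x :=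
    funext fun x => by rw [ENNReal.toReal_ofReal (hρ0 x)]
  rw [this]

lemma sq_diff_le {a b c : ℝ} : (a - b) ^ 2 ≤ 2 * (c - a) ^ 2 + 2 * (c - b) ^ 2 := by
  nlinarith [sq_nonneg (a + b - 2 * c)]

/-- The restricted variance of `gi` w.r.t. the (unnormalized) measure with density `ρ`
equals `M` times the mean-centered second moment. -/
lemma restVar_eq {X : Type*} [MeasurableSpace X] (ν : Measure X) {ρ : X → ℝ}
    (hρm : Measurable ρ) (hρ0 : ∀ x, 0 ≤ ρ x) {S : Set X} (hS : MeasurableSet S)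
    (hρInt : Integrable ρ ν) {gi : X → ℝ}
    (hgi : MemLp gi 2 ((ν.withDensity fun x => ENNReal.ofReal (ρ x)).restrict S))
    {M : ℝ} (hM : M = ∫ x in S, ρ x ∂ν) (hM0 : 0 < M)
    {gb : ℝ} (hgb : gb = ∫ x in S, gi x * (ρ x / M) ∂ν) :
    restVar (ν.withDensity fun x => ENNReal.ofReal (ρ x)) S gi
      = M * ∫ x in S, (gi x - gb) ^ 2 * ρ x ∂ν := by
  have hMuniv : ((((ν.withDensity fun x => ENNReal.ofReal (ρ x))).restrict S)
      Set.univ).toReal = M := by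
    rw [Measure.restrict_apply_univ, withDensity_apply _ hS,
      ← ofReal_integral_eq_lintegral_ofReal hρInt.restrict
        (Filter.Eventually.of_forall hρ0), ENNReal.toReal_ofReal (by rw [← hM]; exact hM0.le),
      hM]
  haveI hfin : IsFiniteMeasure ((ν.withDensity fun x => ENNReal.ofReal (ρ x)).restrict S) := by
    constructor
    rw [Measure.restrict_apply_univ, withDensity_apply _ hS,
      ← ofReal_integral_eq_lintegral_ofReal hρInt.restrict (Filter.Eventually.of_forall hρ0)]
    exact ENNReal.ofReal_lt_top
  have hgiInt : Integrable gi ((ν.withDensity fun x => ENNReal.ofReal (ρ x)).restrict S) :=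
    hgi.integrable one_le_two
  have hgi2Int : Integrable (fun x => gi x ^ 2)
      ((ν.withDensity fun x => ENNReal.ofReal (ρ x)).restrict S) := hgi.integrable_sq
  have expand : ∀ c : ℝ,
      (∫ x, (gi x - c) ^ 2 ∂((ν.withDensity fun x => ENNReal.ofReal (ρ x)).restrict S))
        = (∫ x, gi x ^ 2 ∂((ν.withDensity fun x => ENNReal.ofReal (ρ x)).restrict S))
          - 2 * c * (∫ x, gi x ∂((ν.withDensity fun x => ENNReal.ofReal (ρ x)).restrict S))
          + c ^ 2 * M := by
    intro c
    have e1 : Integrable (fun x => gi x ^ 2 - 2 * c * gi x)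
        ((ν.withDensity fun x => ENNReal.ofReal (ρ x)).restrict S) :=
      hgi2Int.sub (hgiInt.const_mul _)
    calc (∫ x, (gi x - c) ^ 2 ∂((ν.withDensity fun x => ENNReal.ofReal (ρ x)).restrict S))
        = ∫ x, (gi x ^ 2 - 2 * c * gi x + c ^ 2)
            ∂((ν.withDensity fun x => ENNReal.ofReal (ρ x)).restrict S) :=
          integral_congr_ae (Filter.Eventually.of_forall fun x => by ring)
      _ = (∫ x, (gi x ^ 2 - 2 * c * gi x)
            ∂((ν.withDensity fun x => ENNReal.ofReal (ρ x)).restrict S))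
          + ∫ _x, (c ^ 2 : ℝ) ∂((ν.withDensity fun x => ENNReal.ofReal (ρ x)).restrict S) :=
          integral_add e1 (integrable_const _)
      _ = ((∫ x, gi x ^ 2 ∂((ν.withDensity fun x => ENNReal.ofReal (ρ x)).restrict S))
          - ∫ x, 2 * c * gi x ∂((ν.withDensity fun x => ENNReal.ofReal (ρ x)).restrict S))
          + ∫ _x, (c ^ 2 : ℝ) ∂((ν.withDensity fun x => ENNReal.ofReal (ρ x)).restrict S) := by
          congr 1
          exact integral_sub hgi2Int (hgiInt.const_mul _)
      _ = _ := by
          rw [integral_const_mul, integral_const, smul_eq_mul, measureReal_def, hMuniv]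
          ring
  have hgb' : (∫ x, gi x ∂((ν.withDensity fun x => ENNReal.ofReal (ρ x)).restrict S))
      = gb * M := by
    rw [wd_setIntegral ν hρm hρ0 hS gi, hgb,
      show (∫ x in S, gi x * (ρ x / M) ∂ν) = M⁻¹ * ∫ x in S, gi x * ρ x ∂ν from by
        rw [← integral_const_mul]
        exact integral_congr_ae (Filter.Eventually.of_forall fun x => by ring)]
    field_simp
  have hVar : (∫ x in S, (gi x - gb) ^ 2 * ρ x ∂ν)
      = ∫ x, (gi x - gb) ^ 2 ∂((ν.withDensity fun x => ENNReal.ofReal (ρ x)).restrict S) :=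
    (wd_setIntegral ν hρm hρ0 hS _).symm
  have step : ∀ a, (∫ b in S, (gi b - gi a) ^ 2 ∂(ν.withDensity fun x => ENNReal.ofReal (ρ x)))
      = ((∫ x, gi x ^ 2 ∂((ν.withDensity fun x => ENNReal.ofReal (ρ x)).restrict S))
        - (2 * (∫ x, gi x ∂((ν.withDensity fun x => ENNReal.ofReal (ρ x)).restrict S))) * gi a)
        + M * gi a ^ 2 :=
    fun a => (expand (gi a)).trans (by ring)
  calc restVar (ν.withDensity fun x => ENNReal.ofReal (ρ x)) S gi
      = (1/2) * ∫ a in S,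
          (((∫ x, gi x ^ 2 ∂((ν.withDensity fun x => ENNReal.ofReal (ρ x)).restrict S))
            - (2 * (∫ x, gi x ∂((ν.withDensity fun x => ENNReal.ofReal (ρ x)).restrict S)))
              * gi a)
          + M * gi a ^ 2) ∂(ν.withDensity fun x => ENNReal.ofReal (ρ x)) := by
        simp only [restVar, one_div]
        congr 1
        exact integral_congr_ae (Filter.Eventually.of_forall fun a => step a)
    _ = (1/2) * ((∫ a in S,
          ((∫ x, gi x ^ 2 ∂((ν.withDensity fun x => ENNReal.ofReal (ρ x)).restrict S))
            - (2 * (∫ x, gi x ∂((ν.withDensity fun x => ENNReal.ofReal (ρ x)).restrict S)))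
              * gi a) ∂(ν.withDensity fun x => ENNReal.ofReal (ρ x)))
        + ∫ a in S, M * gi a ^ 2 ∂(ν.withDensity fun x => ENNReal.ofReal (ρ x))) := by
        congr 1
        exact integral_add ((integrable_const _).sub (hgiInt.const_mul _))
          (hgi2Int.const_mul _)
    _ = (1/2) * (((∫ _a in S,
          (∫ x, gi x ^ 2 ∂((ν.withDensity fun x => ENNReal.ofReal (ρ x)).restrict S))
            ∂(ν.withDensity fun x => ENNReal.ofReal (ρ x)))
          - ∫ a in S,
            (2 * (∫ x, gi x ∂((ν.withDensity fun x => ENNReal.ofReal (ρ x)).restrict S)))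
              * gi a ∂(ν.withDensity fun x => ENNReal.ofReal (ρ x)))
        + ∫ a in S, M * gi a ^ 2 ∂(ν.withDensity fun x => ENNReal.ofReal (ρ x))) := by
        congr 2
        exact integral_sub (integrable_const _) (hgiInt.const_mul _)
    _ = (1/2) * ((M * (∫ x, gi x ^ 2 ∂((ν.withDensity fun x => ENNReal.ofReal (ρ x)).restrict S))
          - (2 * (∫ x, gi x ∂((ν.withDensity fun x => ENNReal.ofReal (ρ x)).restrict S)))
            * (∫ x, gi x ∂((ν.withDensity fun x => ENNReal.ofReal (ρ x)).restrict S)))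
        + M * (∫ x, gi x ^ 2 ∂((ν.withDensity fun x => ENNReal.ofReal (ρ x)).restrict S))) := by
        rw [integral_const_mul, integral_const_mul, integral_const, smul_eq_mul, measureReal_def, hMuniv]
    _ = M * ∫ x in S, (gi x - gb) ^ 2 * ρ x ∂ν := by
        rw [hVar, expand gb, hgb']
        ring

theorem stmt2 {X : Type*} [MeasurableSpace X] (ν : Measure X)
    (L n : ℕ) (hL : 2 ≤ L) (hn : 0 < n)
    (lam : ℝ) (hlam : lam ∈ Set.Ioo (0 : ℝ) 1)
    (r : Fin L → ℝ) (hr : ∀ i, 0 < r i) (hr1 : ∑ i, r i = 1)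
    (w : Fin L → Fin n → ℝ) (hw : ∀ i j, 0 ≤ w i j) (hw1 : ∀ i, ∑ j, w i j = 1)
    (pc : Fin L → Fin n → X → ℝ)
    (hpc0 : ∀ i j x, 0 ≤ pc i j x) (hpcm : ∀ i j, Measurable (pc i j))
    (hpc1 : ∀ i j, ∫ x, pc i j x ∂ν = 1)
    (X0 : Set X) (hX0 : MeasurableSet X0)
    (hpos : ∀ i j, 0 < ∫ x in X0, pc i j x ∂ν)
    (p : Fin L → X → ℝ) (hp : ∀ i x, p i x = ∑ j, w i j * pc i j x)
    (PijX0 : Fin L → Fin n → ℝ) (hPij : ∀ i j, PijX0 i j = ∫ x in X0, pc i j x ∂ν)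
    (θ : ℝ) (hθ : θ = ∑ i, r i * ∫ x in X0, p i x ∂ν)
    -- the function `g ∈ L²([L] × X, P)` and its projection `ḡ`
    (g : Fin L × X → ℝ) (hgm : Measurable g) (hg : MemLp g 2 (stStat ν r p))
    (gbar : Fin L → Fin n → ℝ)
    (hgbar : ∀ i j, gbar i j = ∫ x in X0, g (i, x) * (pc i j x / PijX0 i j) ∂ν)
    -- the within-level part `Ē^J` of the Dirichlet form of the projected chain
    (EJ : ℝ)
    (hEJ : EJ = (1 / (2 * θ)) * ∑ i : Fin L, ∑ j : Fin n, ∑ j' : Fin n,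
      (gbar i j - gbar i j') ^ 2 * (r i * w i j * PijX0 i j) *
        ((1 - lam) * ∫ x in X0, (pc i j x / PijX0 i j) *
          (w i j' * pc i j' x / p i x) ∂ν)) :
    EJ ≤ (2 * (1 - lam) / θ) * ∑ i : Fin L, ∑ j : Fin n,
      (r i * w i j / PijX0 i j) *
        restVar (ν.withDensity fun x => ENNReal.ofReal (pc i j x)) X0 (fun x => g (i, x)) := by
  obtain ⟨hlam0, hlam1⟩ := hlam
  have h1lam : (0:ℝ) < 1 - lam := by linarith
  -- basic facts
  have hgim : ∀ i : Fin L, Measurable fun x => g (i, x) :=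
    fun i => hgm.comp measurable_prodMk_left
  have hpm : ∀ i, Measurable (p i) := by
    intro i
    have : p i = fun x => ∑ j, w i j * pc i j x := funext (hp i)
    rw [this]
    exact Finset.measurable_sum _ fun j _ => (hpcm i j).const_mul _
  have hppos : ∀ i x, 0 ≤ p i x := fun i x =>
    (hp i x) ▸ Finset.sum_nonneg fun j _ => mul_nonneg (hw i j) (hpc0 i j x)
  have hPpos : ∀ i j, 0 < PijX0 i j := fun i j => (hPij i j) ▸ hpos i j
  have hpcInt : ∀ i j, Integrable (pc i j) ν := by
    intro i j
    by_contra h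
    have := hpc1 i j
    rw [integral_undef h] at this
    norm_num at this
  -- `g (i, ·)` is in L² of the measure with density `pc i j` restricted to `X0`
  have memL2 : ∀ i j, 0 < w i j → MemLp (fun x => g (i, x)) 2
      ((ν.withDensity fun x => ENNReal.ofReal (pc i j x)).restrict X0) := by
    intro i j hwij
    have hri : ENNReal.ofReal (r i) ≠ 0 := by
      simp only [ne_eq, ENNReal.ofReal_eq_zero, not_le]
      exact hr i
    have hwi : ENNReal.ofReal (w i j) ≠ 0 := by
      simp only [ne_eq, ENNReal.ofReal_eq_zero, not_le]
      exact hwij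
    have step1 : MemLp g 2 (ENNReal.ofReal (r i) •
        ((ν.withDensity fun x => ENNReal.ofReal (p i x)).map fun x => (i, x))) :=
      hg.mono_measure (Measure.le_sum _ i)
    have step2 : MemLp g 2
        ((ν.withDensity fun x => ENNReal.ofReal (p i x)).map fun x => (i, x)) := by
      have h2 := step1.smul_measure (c := (ENNReal.ofReal (r i))⁻¹)
        (ENNReal.inv_ne_top.mpr hri)
      rwa [smul_smul, ENNReal.inv_mul_cancel hri ENNReal.ofReal_ne_top, one_smul] at h2
    have step3 : MemLp (fun x => g (i, x)) 2 (ν.withDensity fun x => ENNReal.ofReal (p i x)) :=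
      ((measurableEmbedding_prodMk_left i).memLp_map_measure_iff).mp step2
    have hle : (ν.withDensity fun x => ENNReal.ofReal (pc i j x)) ≤
        (ENNReal.ofReal (w i j))⁻¹ • (ν.withDensity fun x => ENNReal.ofReal (p i x)) := by
      rw [← withDensity_smul' _ _ (ENNReal.inv_ne_top.mpr hwi)]
      refine withDensity_mono (Filter.Eventually.of_forall fun x => ?_)
      simp only [Pi.smul_apply, smul_eq_mul]
      have h1 : ENNReal.ofReal (pc i j x) =
          (ENNReal.ofReal (w i j))⁻¹ * (ENNReal.ofReal (w i j) * ENNReal.ofReal (pc i j x)) := by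
        rw [← mul_assoc, ENNReal.inv_mul_cancel hwi ENNReal.ofReal_ne_top, one_mul]
      rw [h1]
      refine mul_le_mul_right ?_ _
      rw [← ENNReal.ofReal_mul (hw i j)]
      refine ENNReal.ofReal_le_ofReal ?_
      rw [hp]
      exact Finset.single_le_sum (fun k _ => mul_nonneg (hw i k) (hpc0 i k x)) (mem_univ j)
    have step4 : MemLp (fun x => g (i, x)) 2
        (ν.withDensity fun x => ENNReal.ofReal (pc i j x)) :=
      ((step3.smul_measure (ENNReal.inv_ne_top.mpr hwi)).mono_measure hle)
    exact step4.mono_measure Measure.restrict_le_self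
  -- key integrability fact
  have key2 : ∀ i j (c : ℝ), 0 < w i j →
      Integrable (fun x => (g (i, x) - c) ^ 2 * pc i j x) (ν.restrict X0) := by
    intro i j c hwij
    haveI : IsFiniteMeasure ((ν.withDensity fun x => ENNReal.ofReal (pc i j x)).restrict X0) := by
      constructor
      rw [Measure.restrict_apply_univ, withDensity_apply _ hX0,
        ← ofReal_integral_eq_lintegral_ofReal ((hpcInt i j).restrict)
          (Filter.Eventually.of_forall fun x => hpc0 i j x)]
      exact ENNReal.ofReal_lt_top
    have h1 : MemLp (fun x => g (i, x) - c) 2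
        ((ν.withDensity fun x => ENNReal.ofReal (pc i j x)).restrict X0) :=
      (memL2 i j hwij).sub (memLp_const c)
    have h2 := h1.integrable_sq
    exact (wd_integrable ν (hpcm i j) (hpc0 i j) hX0 _).mp h2
  -- the ν-integral form of `V i j`
  set V : Fin L → Fin n → ℝ :=
    fun i j => ∫ x in X0, (g (i, x) - gbar i j) ^ 2 * pc i j x ∂ν with hVdef
  -- step 6 : relation between V and restVar
  have step6 : ∀ i j, r i * w i j * V i j = (r i * w i j / PijX0 i j) *
      restVar (ν.withDensity fun x => ENNReal.ofReal (pc i j x)) X0 (fun x => g (i, x)) := by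
    intro i j
    rcases eq_or_lt_of_le (hw i j) with h0 | hwij
    · rw [← h0]; ring
    · have hrv := restVar_eq ν (hpcm i j) (hpc0 i j) hX0 (hpcInt i j) (memL2 i j hwij)
        (hPij i j) (hPpos i j) (hgbar i j)
      rw [hrv]
      simp only [hVdef]
      generalize (∫ x in X0, (g (i, x) - gbar i j) ^ 2 * pc i j x ∂ν) = A
      have hPne : PijX0 i j ≠ 0 := (hPpos i j).ne'
      field_simp
  -- positivity of θ
  have hwpos : ∀ i, ∃ j, 0 < w i j := by
    intro i
    by_contra h
    push_neg at h
    have h1 := hw1 i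
    rw [Finset.sum_eq_zero (fun j _ => le_antisymm (h j) (hw i j))] at h1
    norm_num at h1
  have hθpos : 0 < θ := by
    have hθi : ∀ i, ∫ x in X0, p i x ∂ν = ∑ j, w i j * PijX0 i j := by
      intro i
      rw [show (∫ x in X0, p i x ∂ν) = ∫ x in X0, ∑ j, w i j * pc i j x ∂ν from
        integral_congr_ae (Filter.Eventually.of_forall fun x => hp i x),
        integral_finset_sum _ (fun j _ => ((hpcInt i j).restrict).const_mul _)]
      exact Finset.sum_congr rfl fun j _ => by rw [integral_const_mul, hPij]
    rw [hθ]
    have : Nonempty (Fin L) := ⟨⟨0, by omega⟩⟩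
    refine Finset.sum_pos (fun i _ => mul_pos (hr i) ?_) Finset.univ_nonempty
    rw [hθi]
    obtain ⟨j0, hj0⟩ := hwpos i
    exact Finset.sum_pos' (fun j _ => mul_nonneg (hw i j) (hPpos i j).le)
      ⟨j0, mem_univ _, mul_pos hj0 (hPpos i j0)⟩
  -- pointwise bounds on the jump density ratios
  have hqnn : ∀ i (j : Fin n) x, 0 ≤ w i j * pc i j x / p i x := fun i j x =>
    div_nonneg (mul_nonneg (hw i j) (hpc0 i j x)) (hppos i x)
  have hq1 : ∀ i (j : Fin n) x, w i j * pc i j x / p i x ≤ 1 := by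
    intro i j x
    refine div_le_one_of_le₀ ?_ (hppos i x)
    rw [hp]
    exact Finset.single_le_sum (fun k _ => mul_nonneg (hw i k) (hpc0 i k x)) (mem_univ j)
  have hqsum : ∀ i x, ∑ j, w i j * pc i j x / p i x ≤ 1 := by
    intro i x
    rw [← Finset.sum_div, ← hp i x]
    exact div_le_one_of_le₀ le_rfl (hppos i x)
  -- the main per-level estimate
  have main : ∀ i, (∑ j : Fin n, ∑ j' : Fin n,
      (gbar i j - gbar i j') ^ 2 * (r i * w i j * PijX0 i j) *
        ((1 - lam) * ∫ x in X0, (pc i j x / PijX0 i j) *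
          (w i j' * pc i j' x / p i x) ∂ν)) ≤
      (4 * (1 - lam)) * ∑ j : Fin n, (r i * w i j / PijX0 i j) *
        restVar (ν.withDensity fun x => ENNReal.ofReal (pc i j x)) X0 (fun x => g (i, x)) := by
    intro i
    set T1 : Fin n → Fin n → X → ℝ := fun j j' x =>
      (2 * (r i * (1 - lam) * w i j)) * ((g (i, x) - gbar i j) ^ 2 * pc i j x) *
        (w i j' * pc i j' x / p i x) with hT1def
    set T2 : Fin n → Fin n → X → ℝ := fun j j' x =>
      (2 * (r i * (1 - lam) * w i j')) * ((g (i, x) - gbar i j') ^ 2 * pc i j' x) *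
        (w i j * pc i j x / p i x) with hT2def
    have hc1 : ∀ j : Fin n, (0:ℝ) ≤ 2 * (r i * (1 - lam) * w i j) := by
      intro j
      apply mul_nonneg (by norm_num)
      exact mul_nonneg (mul_nonneg (hr i).le h1lam.le) (hw i j)
    have hT1m : ∀ j j', AEStronglyMeasurable (T1 j j') (ν.restrict X0) := by
      intro j j'
      apply Measurable.aestronglyMeasurable
      simp only [hT1def]
      fun_prop
    have hT2m : ∀ j j', AEStronglyMeasurable (T2 j j') (ν.restrict X0) := by
      intro j j'
      apply Measurable.aestronglyMeasurable
      simp only [hT2def]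
      fun_prop
    have hT1nn : ∀ j j' x, 0 ≤ T1 j j' x := by
      intro j j' x
      simp only [hT1def]
      exact mul_nonneg (mul_nonneg (hc1 j) (mul_nonneg (sq_nonneg _) (hpc0 i j x)))
        (hqnn i j' x)
    have hT2nn : ∀ j j' x, 0 ≤ T2 j j' x := by
      intro j j' x
      simp only [hT2def]
      exact mul_nonneg (mul_nonneg (hc1 j') (mul_nonneg (sq_nonneg _) (hpc0 i j' x)))
        (hqnn i j x)
    have hT1int : ∀ j j', Integrable (T1 j j') (ν.restrict X0) := by
      intro j j'
      rcases eq_or_lt_of_le (hw i j) with h0 | hwij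
      · have hz : T1 j j' = fun _ => (0:ℝ) := by
          funext x
          simp only [hT1def, ← h0]
          ring
        rw [hz]
        simpa using integrable_zero X ℝ (ν.restrict X0)
      · refine Integrable.mono'
          ((key2 i j (gbar i j) hwij).const_mul (2 * (r i * (1 - lam) * w i j)))
          (hT1m j j') (Filter.Eventually.of_forall fun x => ?_)
        rw [Real.norm_of_nonneg (hT1nn j j' x)]
        simp only [hT1def]
        calc (2 * (r i * (1 - lam) * w i j)) * ((g (i, x) - gbar i j) ^ 2 * pc i j x) *
              (w i j' * pc i j' x / p i x)
            ≤ (2 * (r i * (1 - lam) * w i j)) * ((g (i, x) - gbar i j) ^ 2 * pc i j x) * 1 :=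
              mul_le_mul_of_nonneg_left (hq1 i j' x)
                (mul_nonneg (hc1 j) (mul_nonneg (sq_nonneg _) (hpc0 i j x)))
          _ = (2 * (r i * (1 - lam) * w i j)) * ((g (i, x) - gbar i j) ^ 2 * pc i j x) := by
              ring
    have hT2int : ∀ j j', Integrable (T2 j j') (ν.restrict X0) := by
      intro j j'
      rcases eq_or_lt_of_le (hw i j') with h0 | hwij
      · have hz : T2 j j' = fun _ => (0:ℝ) := by
          funext x
          simp only [hT2def, ← h0]
          ring
        rw [hz]
        simpa using integrable_zero X ℝ (ν.restrict X0)
      · refine Integrable.mono'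
          ((key2 i j' (gbar i j') hwij).const_mul (2 * (r i * (1 - lam) * w i j')))
          (hT2m j j') (Filter.Eventually.of_forall fun x => ?_)
        rw [Real.norm_of_nonneg (hT2nn j j' x)]
        simp only [hT2def]
        calc (2 * (r i * (1 - lam) * w i j')) * ((g (i, x) - gbar i j') ^ 2 * pc i j' x) *
              (w i j * pc i j x / p i x)
            ≤ (2 * (r i * (1 - lam) * w i j')) * ((g (i, x) - gbar i j') ^ 2 * pc i j' x) * 1 :=
              mul_le_mul_of_nonneg_left (hq1 i j x)
                (mul_nonneg (hc1 j') (mul_nonneg (sq_nonneg _) (hpc0 i j' x)))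
          _ = (2 * (r i * (1 - lam) * w i j')) * ((g (i, x) - gbar i j') ^ 2 * pc i j' x) := by
              ring
    -- per-pair bound
    have step1 : ∀ j j', (gbar i j - gbar i j') ^ 2 * (r i * w i j * PijX0 i j) *
        ((1 - lam) * ∫ x in X0, (pc i j x / PijX0 i j) * (w i j' * pc i j' x / p i x) ∂ν)
        ≤ (∫ x in X0, T1 j j' x ∂ν) + ∫ x in X0, T2 j j' x ∂ν := by
      intro j j'
      have hPne : PijX0 i j ≠ 0 := (hPpos i j).ne'
      have heq : (gbar i j - gbar i j') ^ 2 * (r i * w i j * PijX0 i j) *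
          ((1 - lam) * ∫ x in X0, (pc i j x / PijX0 i j) * (w i j' * pc i j' x / p i x) ∂ν)
          = ∫ x in X0, ((gbar i j - gbar i j') ^ 2 * (r i * w i j) * (1 - lam)) *
              (pc i j x * (w i j' * pc i j' x / p i x)) ∂ν := by
        rw [integral_const_mul,
          show (∫ x in X0, (pc i j x / PijX0 i j) * (w i j' * pc i j' x / p i x) ∂ν)
            = (PijX0 i j)⁻¹ * ∫ x in X0, pc i j x * (w i j' * pc i j' x / p i x) ∂ν from by
            rw [← integral_const_mul]
            exact integral_congr_ae (Filter.Eventually.of_forall fun x => by ring)]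
        field_simp
        have hI : ∫ x in X0, pc i j x * w i j' * pc i j' x / p i x ∂ν
            = ∫ a in X0, w i j' * pc i j a * pc i j' a / p i a ∂ν :=
          integral_congr_ae (Filter.Eventually.of_forall fun x => by ring)
        rw [hI]
      rw [heq]
      have hadd : Integrable (fun x => T1 j j' x + T2 j j' x) (ν.restrict X0) :=
        (hT1int j j').add (hT2int j j')
      calc (∫ x in X0, ((gbar i j - gbar i j') ^ 2 * (r i * w i j) * (1 - lam)) *
              (pc i j x * (w i j' * pc i j' x / p i x)) ∂ν)
          ≤ ∫ x in X0, (T1 j j' x + T2 j j' x) ∂ν := by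
            refine integral_mono_of_nonneg (Filter.Eventually.of_forall fun x => ?_) hadd
              (Filter.Eventually.of_forall fun x => ?_)
            · exact mul_nonneg
                (mul_nonneg (mul_nonneg (sq_nonneg _)
                  (mul_nonneg (hr i).le (hw i j))) h1lam.le)
                (mul_nonneg (hpc0 i j x) (hqnn i j' x))
            · have hQ : (0:ℝ) ≤ r i * (1 - lam) *
                  (w i j * pc i j x * (w i j' * pc i j' x / p i x)) := by
                apply mul_nonneg (mul_nonneg (hr i).le h1lam.le)
                exact mul_nonneg (mul_nonneg (hw i j) (hpc0 i j x)) (hqnn i j' x)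
              have hkey := mul_le_mul_of_nonneg_right
                (sq_diff_le (a := gbar i j) (b := gbar i j') (c := g (i, x))) hQ
              simp only [hT1def, hT2def]
              exact le_trans (le_of_eq (by ring)) (le_trans hkey (le_of_eq (by ring)))
        _ = (∫ x in X0, T1 j j' x ∂ν) + ∫ x in X0, T2 j j' x ∂ν :=
            integral_add (hT1int j j') (hT2int j j')
    -- summing the `T1` part
    have step3 : ∀ j, (∑ j', ∫ x in X0, T1 j j' x ∂ν)
        ≤ 2 * (r i * (1 - lam) * w i j) * V i j := by
      intro j
      have hsum := integral_finset_sum (μ := ν.restrict X0) univ (fun j' _ => hT1int j j')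
      rw [← hsum]
      have hD1 : Integrable (fun x => (2 * (r i * (1 - lam) * w i j)) *
          ((g (i, x) - gbar i j) ^ 2 * pc i j x)) (ν.restrict X0) := by
        rcases eq_or_lt_of_le (hw i j) with h0 | hwij
        · have hz : (fun x => (2 * (r i * (1 - lam) * w i j)) *
              ((g (i, x) - gbar i j) ^ 2 * pc i j x)) = fun _ => (0:ℝ) := by
            funext x
            rw [← h0]
            ring
          rw [hz]
          simpa using integrable_zero X ℝ (ν.restrict X0)
        · exact (key2 i j (gbar i j) hwij).const_mul _
      refine le_trans (integral_mono_of_nonneg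
        (Filter.Eventually.of_forall fun x => Finset.sum_nonneg fun j' _ => hT1nn j j' x)
        hD1 (Filter.Eventually.of_forall fun x => ?_)) ?_
      · have h5 : (∑ j', T1 j j' x) = (2 * (r i * (1 - lam) * w i j)) *
            ((g (i, x) - gbar i j) ^ 2 * pc i j x) * ∑ j', w i j' * pc i j' x / p i x := by
          rw [Finset.mul_sum]
        exact h5.trans_le (le_trans (mul_le_mul_of_nonneg_left (hqsum i x)
          (mul_nonneg (hc1 j) (mul_nonneg (sq_nonneg _) (hpc0 i j x))))
          (le_of_eq (mul_one _)))
      · rw [integral_const_mul]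
    -- summing the `T2` part
    have step4 : ∀ j', (∑ j, ∫ x in X0, T2 j j' x ∂ν)
        ≤ 2 * (r i * (1 - lam) * w i j') * V i j' := by
      intro j'
      have hsum := integral_finset_sum (μ := ν.restrict X0) univ (fun j _ => hT2int j j')
      rw [← hsum]
      have hD1 : Integrable (fun x => (2 * (r i * (1 - lam) * w i j')) *
          ((g (i, x) - gbar i j') ^ 2 * pc i j' x)) (ν.restrict X0) := by
        rcases eq_or_lt_of_le (hw i j') with h0 | hwij
        · have hz : (fun x => (2 * (r i * (1 - lam) * w i j')) *
              ((g (i, x) - gbar i j') ^ 2 * pc i j' x)) = fun _ => (0:ℝ) := by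
            funext x
            rw [← h0]
            ring
          rw [hz]
          simpa using integrable_zero X ℝ (ν.restrict X0)
        · exact (key2 i j' (gbar i j') hwij).const_mul _
      refine le_trans (integral_mono_of_nonneg
        (Filter.Eventually.of_forall fun x => Finset.sum_nonneg fun j _ => hT2nn j j' x)
        hD1 (Filter.Eventually.of_forall fun x => ?_)) ?_
      · have h5 : (∑ j, T2 j j' x) = (2 * (r i * (1 - lam) * w i j')) *
            ((g (i, x) - gbar i j') ^ 2 * pc i j' x) * ∑ j, w i j * pc i j x / p i x := by
          rw [Finset.mul_sum]
        exact h5.trans_le (le_trans (mul_le_mul_of_nonneg_left (hqsum i x)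
          (mul_nonneg (hc1 j') (mul_nonneg (sq_nonneg _) (hpc0 i j' x))))
          (le_of_eq (mul_one _)))
      · rw [integral_const_mul]
    -- put the pieces together
    calc (∑ j : Fin n, ∑ j' : Fin n,
        (gbar i j - gbar i j') ^ 2 * (r i * w i j * PijX0 i j) *
          ((1 - lam) * ∫ x in X0, (pc i j x / PijX0 i j) * (w i j' * pc i j' x / p i x) ∂ν))
        ≤ ∑ j : Fin n, ∑ j' : Fin n,
            ((∫ x in X0, T1 j j' x ∂ν) + ∫ x in X0, T2 j j' x ∂ν) :=
          Finset.sum_le_sum fun j _ => Finset.sum_le_sum fun j' _ => step1 j j'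
      _ = (∑ j : Fin n, ∑ j' : Fin n, ∫ x in X0, T1 j j' x ∂ν)
          + ∑ j : Fin n, ∑ j' : Fin n, ∫ x in X0, T2 j j' x ∂ν := by
          rw [← Finset.sum_add_distrib]
          exact Finset.sum_congr rfl fun j _ => Finset.sum_add_distrib
      _ ≤ (∑ j : Fin n, 2 * (r i * (1 - lam) * w i j) * V i j)
          + ∑ j' : Fin n, 2 * (r i * (1 - lam) * w i j') * V i j' := by
          refine add_le_add (Finset.sum_le_sum fun j _ => step3 j) ?_
          rw [Finset.sum_comm]
          exact Finset.sum_le_sum fun j' _ => step4 j'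
      _ = ∑ j : Fin n, (4 * (1 - lam)) * (r i * w i j * V i j) := by
          rw [← Finset.sum_add_distrib]
          exact Finset.sum_congr rfl fun j _ => by ring
      _ = (4 * (1 - lam)) * ∑ j : Fin n, (r i * w i j / PijX0 i j) *
            restVar (ν.withDensity fun x => ENNReal.ofReal (pc i j x)) X0
              (fun x => g (i, x)) := by
          rw [Finset.mul_sum]
          exact Finset.sum_congr rfl fun j _ => by rw [step6 i j]
  -- final assembly
  rw [hEJ]
  have hsum := Finset.sum_le_sum (fun i (_ : i ∈ univ) => main i)
  calc (1 / (2 * θ)) * ∑ i : Fin L, ∑ j : Fin n, ∑ j' : Fin n,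
      (gbar i j - gbar i j') ^ 2 * (r i * w i j * PijX0 i j) *
        ((1 - lam) * ∫ x in X0, (pc i j x / PijX0 i j) * (w i j' * pc i j' x / p i x) ∂ν)
      ≤ (1 / (2 * θ)) * ∑ i : Fin L, (4 * (1 - lam)) *
          ∑ j : Fin n, (r i * w i j / PijX0 i j) *
            restVar (ν.withDensity fun x => ENNReal.ofReal (pc i j x)) X0
              (fun x => g (i, x)) :=
        mul_le_mul_of_nonneg_left hsum (by positivity)
    _ = (2 * (1 - lam) / θ) * ∑ i : Fin L, ∑ j : Fin n,
          (r i * w i j / PijX0 i j) *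
            restVar (ν.withDensity fun x => ENNReal.ofReal (pc i j x)) X0
              (fun x => g (i, x)) := by
        rw [← Finset.mul_sum]
        field_simp
        ring
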